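/- Let κ ≥ 0 and let g : ℝ³ \ {0} → ℝ be given by g(z) = (1 − e^{−κ‖z‖})/(4π‖z‖). Then g is differentiable on ℝ³ \ {0} and its gradient is uniformly bounded: ‖∇g(z)‖ ≤ κ²/(8π) for every z ≠ 0. Consequently the first-order normal-derivative parts of the kernels K₂ and K₃ built from the difference G₀ − G_κ are bounded kernels. -/

import Mathlib

open Real

noncomputable section

/-- The difference kernel `g(z) = (1 − e^{−κ‖z‖})/(4π‖z‖) = (G₀ − G_κ)(x, x+z)`. -/
def diffKernel (κ : ℝ) (z : EuclideanSpace ℝ (Fin 3)) : ℝ :=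
  (1 - Real.exp (-κ * ‖z‖)) / (4 * π * ‖z‖)

lemma diffKernel_aux_lower (u : ℝ) : (1 + u) * Real.exp (-u) ≤ 1 := by
  have h := Real.add_one_le_exp u
  calc (1 + u) * Real.exp (-u) ≤ Real.exp u * Real.exp (-u) := by
        apply mul_le_mul_of_nonneg_right _ (Real.exp_nonneg _)
        linarith
    _ = 1 := by rw [← Real.exp_add]; simp

lemma diffKernel_aux_upper (u : ℝ) (hu : 0 ≤ u) :
    1 - (1 + u) * Real.exp (-u) ≤ u ^ 2 / 2 := by
  set F : ℝ → ℝ := fun x => x ^ 2 / 2 - 1 + (1 + x) * Real.exp (-x) with hF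
  have hder : ∀ x : ℝ, HasDerivAt F (x - x * Real.exp (-x)) x := by
    intro x
    have he : HasDerivAt (fun x : ℝ => Real.exp (-x)) (-Real.exp (-x)) x := by
      simpa using (hasDerivAt_neg x).exp
    have h1 : HasDerivAt (fun x : ℝ => 1 + x) 1 x := by
      simpa using (hasDerivAt_id x).const_add 1
    have h2 : HasDerivAt (fun x : ℝ => (1 + x) * Real.exp (-x))
        (1 * Real.exp (-x) + (1 + x) * (-Real.exp (-x))) x := h1.mul he
    have h3 : HasDerivAt (fun y : ℝ => y ^ 2 / 2) x x := by
      have := (hasDerivAt_pow 2 x).div_const 2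
      norm_num at this
      exact this
    have := (h3.sub_const 1).add h2
    exact this.congr_deriv (by ring)
  have hdiff : Differentiable ℝ F := fun x => (hder x).differentiableAt
  have hmono : MonotoneOn F (Set.Ici (0 : ℝ)) := by
    apply monotoneOn_of_deriv_nonneg (convex_Ici 0) hdiff.continuous.continuousOn
      hdiff.differentiableOn
    intro x hx
    rw [interior_Ici] at hx
    rw [(hder x).deriv]
    have hxe : Real.exp (-x) ≤ 1 := Real.exp_le_one_iff.2 (by linarith [(Set.mem_Ioi.mp hx).le])
    nlinarith [(Set.mem_Ioi.mp hx).le]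
  have h0 : F 0 = 0 := by simp [hF]
  have := hmono (Set.self_mem_Ici) (Set.mem_Ici.2 hu) hu
  rw [h0] at this
  simp only [hF] at this
  linarith

/-- For `κ ≥ 0`, the kernel `g(z) = (1 − e^{−κ‖z‖})/(4π‖z‖)` is differentiable away from the
origin, with uniformly bounded gradient: `‖∇g(z)‖ ≤ κ²/(8π)` for every `z ≠ 0`. -/
theorem diffKernel_gradient_bounded (κ : ℝ) (hκ : 0 ≤ κ) :
    DifferentiableOn ℝ (diffKernel κ) {(0 : EuclideanSpace ℝ (Fin 3))}ᶜ ∧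
    ∀ z : EuclideanSpace ℝ (Fin 3), z ≠ 0 →
      ‖gradient (diffKernel κ) z‖ ≤ κ ^ 2 / (8 * π) := by
  have hπ : (0 : ℝ) < π := Real.pi_pos
  -- scalar derivative data
  have hφ : ∀ r : ℝ, 0 < r → HasDerivAt (fun r : ℝ => (1 - Real.exp (-κ * r)) / (4 * π * r))
      ((κ * Real.exp (-κ * r) * (4 * π * r) - (1 - Real.exp (-κ * r)) * (4 * π)) /
        (4 * π * r) ^ 2) r := by
    intro r hr
    have hnum : HasDerivAt (fun r : ℝ => 1 - Real.exp (-κ * r)) (κ * Real.exp (-κ * r)) r := by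
      have hl : HasDerivAt (fun r : ℝ => -κ * r) (-κ) r := by
        simpa using (hasDerivAt_id r).const_mul (-κ)
      have he : HasDerivAt (fun r : ℝ => Real.exp (-κ * r)) (Real.exp (-κ * r) * (-κ)) r :=
        hl.exp
      have := (hasDerivAt_const r (1 : ℝ)).sub he
      exact this.congr_deriv (by ring)
    have hden : HasDerivAt (fun r : ℝ => 4 * π * r) (4 * π) r := by
      simpa using (hasDerivAt_id r).const_mul (4 * π)
    exact hnum.div hden (by positivity)
  -- main per-point fact
  have key : ∀ z : EuclideanSpace ℝ (Fin 3), z ≠ 0 →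
      DifferentiableAt ℝ (diffKernel κ) z ∧
        ‖gradient (diffKernel κ) z‖ ≤ κ ^ 2 / (8 * π) := by
    intro z hz
    have hr : 0 < ‖z‖ := norm_pos_iff.2 hz
    set r := ‖z‖ with hrdef
    -- fderiv of the norm
    have hnorm : DifferentiableAt ℝ (fun z : EuclideanSpace ℝ (Fin 3) => ‖z‖) z :=
      ((contDiffAt_norm ℝ (n := 1) hz).differentiableAt one_ne_zero)
    set N := fderiv ℝ (fun z : EuclideanSpace ℝ (Fin 3) => ‖z‖) z with hN
    have hNd : HasFDerivAt (fun z : EuclideanSpace ℝ (Fin 3) => ‖z‖) N z :=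
      hnorm.hasFDerivAt
    have hN1 : ‖N‖ ≤ 1 := by
      have := hNd.le_of_lipschitz (C := 1) lipschitzWith_one_norm
      simpa using this
    set D := (κ * Real.exp (-κ * r) * (4 * π * r) - (1 - Real.exp (-κ * r)) * (4 * π)) /
        (4 * π * r) ^ 2 with hD
    have hcomp : HasFDerivAt (diffKernel κ) (D • N) z :=
      by have := (hφ r hr).comp_hasFDerivAt z hNd; exact this
    refine ⟨hcomp.differentiableAt, ?_⟩
    -- identify the gradient's norm
    have hgrad : ‖gradient (diffKernel κ) z‖ = ‖fderiv ℝ (diffKernel κ) z‖ := by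
      rw [gradient, LinearIsometryEquiv.norm_map]
    rw [hgrad, hcomp.fderiv]
    -- bound |D|
    have hDval : D = -(1 - (1 + κ * r) * Real.exp (-κ * r)) / (4 * π * r ^ 2) := by
      rw [hD]
      field_simp
      ring
    have hlow : 0 ≤ 1 - (1 + κ * r) * Real.exp (-κ * r) := by
      have := diffKernel_aux_lower (κ * r)
      rw [neg_mul]
      linarith
    have hup : 1 - (1 + κ * r) * Real.exp (-κ * r) ≤ (κ * r) ^ 2 / 2 := by
      have := diffKernel_aux_upper (κ * r) (by positivity)
      rw [neg_mul]
      linarith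
    have hDabs : |D| ≤ κ ^ 2 / (8 * π) := by
      rw [hDval, abs_div, abs_neg, abs_of_nonneg hlow, abs_of_pos (by positivity)]
      rw [div_le_div_iff₀ (by positivity) (by positivity)]
      nlinarith [sq_nonneg r, hr]
    calc ‖D • N‖ = |D| * ‖N‖ := by rw [norm_smul, Real.norm_eq_abs]
      _ ≤ |D| * 1 := by exact mul_le_mul_of_nonneg_left hN1 (abs_nonneg _)
      _ = |D| := mul_one _
      _ ≤ κ ^ 2 / (8 * π) := hDabs
  exact ⟨fun z hz => ((key z hz).1).differentiableWithinAt, fun z hz => (key z hz).2⟩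

end
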